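/- Let (M_n) be a logarithmically convex sequence of positive reals with M_0 = 1 and of moderate growth. Then there exists C > 0 such that for all d, n, a ∈ ℕ with a ≤ dn, M_{dn-a} / M_{dn} ≤ C^a (M_{n-1}/M_n)^a. -/

import Mathlib

theorem stmt_7 (M : ℕ → ℝ) (hpos : ∀ n, 0 < M n) (h0 : M 0 = 1)
    (hlc : ∀ n ≥ 1, (M n) ^ 2 ≤ M (n - 1) * M (n + 1))
    (B : ℝ) (hB : 0 < B)
    (hmg : ∀ n k : ℕ, M (n + k) ≤ B ^ (n + k) * M n * M k) :
    ∃ C > 0, ∀ d n a : ℕ, 1 ≤ d → 1 ≤ n → a ≤ d * n →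
      M (d * n - a) / M (d * n) ≤ C ^ a * (M (n - 1) / M n) ^ a := by
  have hcan : ∀ (x : ℕ) (y : ℝ), M x * (y / M x) = y := by
    intro x y
    rw [mul_comm]; exact div_mul_cancel₀ y (hpos x).ne'
  have hrnn : ∀ j : ℕ, (0:ℝ) ≤ M (j+1) / M j :=
    fun j => (div_pos (hpos _) (hpos _)).le
  have hB1 : 1 ≤ B := by
    have h := hmg 0 1
    simp [h0] at h
    nlinarith [hpos 1]
  -- ratios are increasing
  have hrstep : ∀ j : ℕ, M (j+1) / M j ≤ M (j+2) / M (j+1) := by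
    intro j
    rw [div_le_div_iff₀ (hpos j) (hpos (j+1))]
    have h := hlc (j+1) (by omega)
    simp only [Nat.add_sub_cancel] at h
    nlinarith [h]
  have hrmono : ∀ i j : ℕ, i ≤ j → M (i+1) / M i ≤ M (j+1) / M j := by
    intro i j hij
    induction hij with
    | refl => exact le_refl _
    | step _ ih => exact ih.trans (hrstep _)
  -- telescoping
  have hT : ∀ (t m k : ℕ), t ≤ m → M m * (M (t+1) / M t) ^ k ≤ M (m + k) := by
    intro t m k htm
    induction k with
    | zero => simp
    | succ k ih =>
      have h1 : M (t+1)/M t ≤ M (m+k+1)/M (m+k) := hrmono t (m+k) (by omega)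
      calc M m * (M (t+1)/M t)^(k+1)
          = (M m * (M (t+1)/M t)^k) * (M (t+1)/M t) := by ring
        _ ≤ M (m+k) * (M (m+k+1)/M (m+k)) :=
            mul_le_mul ih h1 (hrnn t) (hpos _).le
        _ = M (m+k+1) := hcan _ _
  -- supermultiplicativity
  have hsm : ∀ i j : ℕ, M i * M j ≤ M (i + j) := by
    intro i j
    induction j with
    | zero => simp [h0]
    | succ j ih =>
      have h1 : M (j+1)/M j ≤ M (i+j+1)/M (i+j) := hrmono j (i+j) (by omega)
      calc M i * M (j+1) = (M i * M j) * (M (j+1)/M j) := by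
            rw [mul_assoc, hcan]
        _ ≤ M (i+j) * (M (i+j+1)/M (i+j)) :=
            mul_le_mul ih h1 (hrnn j) (hpos _).le
        _ = M (i+j+1) := hcan _ _
  -- M s ≤ (M (s+1)/M s)^s
  have hP : ∀ s : ℕ, M s ≤ (M (s+1)/M s) ^ s := by
    intro s
    induction s with
    | zero => simp [h0]
    | succ s ih =>
      calc M (s+1) = M s * (M (s+1)/M s) := (hcan _ _).symm
        _ ≤ (M (s+1)/M s)^s * (M (s+1)/M s) :=
            mul_le_mul_of_nonneg_right ih (hrnn s)
        _ = (M (s+1)/M s)^(s+1) := by ring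
        _ ≤ (M (s+2)/M (s+1))^(s+1) :=
            pow_le_pow_left₀ (hrnn s) (hrstep s) _
  -- M_k^{1/k} increasing, integer form
  have h6 : ∀ s n : ℕ, s ≤ n → M s ^ n ≤ M n ^ s := by
    intro s n hsn
    have h1 : M s * (M (s+1)/M s) ^ (n-s) ≤ M n := by
      have h := hT s s (n - s) le_rfl
      rwa [Nat.add_sub_cancel' hsn] at h
    have h2 : M s ^ (n - s) ≤ ((M (s+1)/M s)^(n-s)) ^ s := by
      calc M s ^ (n-s) ≤ ((M (s+1)/M s)^s)^(n-s) :=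
            pow_le_pow_left₀ (hpos s).le (hP s) _
        _ = ((M (s+1)/M s)^(n-s))^s := by ring
    have h3 : ((M (s+1)/M s)^(n-s)) ^ s ≤ (M n / M s) ^ s := by
      apply pow_le_pow_left₀ (pow_nonneg (hrnn s) _)
      rw [le_div_iff₀ (hpos s), mul_comm]
      exact h1
    calc M s ^ n = M s ^ s * M s ^ (n-s) := by
          rw [← pow_add, Nat.add_sub_cancel' hsn]
      _ ≤ M s ^ s * (M n / M s)^s :=
          mul_le_mul_of_nonneg_left (h2.trans h3) (pow_nonneg (hpos s).le _)
      _ = M n ^ s := by rw [← mul_pow, hcan]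
  refine ⟨B^2, by positivity, ?_⟩
  intro d n a hd hn ha
  rcases Nat.exists_eq_succ_of_ne_zero (by omega : n ≠ 0) with ⟨n0, rfl⟩
  simp only [Nat.succ_eq_add_one, Nat.add_sub_cancel] at ha ⊢
  set ρ := M (n0+1) / M n0 with hρ
  have hρpos : 0 < ρ := div_pos (hpos _) (hpos _)
  set m := d * (n0+1) - a with hmdef
  have hma : m + a = d * (n0+1) := by omega
  have hB2 : (1:ℝ) ≤ B^2 := by nlinarith
  -- key inequality
  have key : M m * ρ ^ a ≤ (B^2) ^ a * M (d * (n0+1)) := by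
    have h4 : ρ ^ (n0+1) ≤ (B^2)^(n0+1) * M (n0+1) := by
      have t1 : M (n0+1) * ρ ^ (n0+1) ≤ M ((n0+1) + (n0+1)) :=
        hT n0 (n0+1) (n0+1) (by omega)
      have t2 : M ((n0+1) + (n0+1)) ≤ B ^ ((n0+1)+(n0+1)) * M (n0+1) * M (n0+1) := hmg _ _
      have t3 : (B:ℝ) ^ ((n0+1)+(n0+1)) = (B^2)^(n0+1) := by ring
      have t4 := t1.trans t2
      rw [t3] at t4
      have hMn := hpos (n0+1)
      nlinarith [t4]
    by_cases hA : n0 + 1 ≤ m + 1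
    · -- easy case: whole window above n
      have h1 : M m * ρ ^ a ≤ M (m + a) := hT n0 m a (by omega)
      rw [hma] at h1
      calc M m * ρ ^ a ≤ M (d * (n0+1)) := h1
        _ = 1 * M (d * (n0+1)) := (one_mul _).symm
        _ ≤ (B^2)^a * M (d * (n0+1)) :=
            mul_le_mul_of_nonneg_right (one_le_pow₀ hB2) (hpos _).le
    · push_neg at hA
      by_cases hBc : n0 + 1 ≤ a
      · -- a ≥ n
        have h5 : (ρ^a)^(n0+1) ≤ ((B^2)^a * M a)^(n0+1) := by
          calc (ρ^a)^(n0+1) = (ρ^(n0+1))^a := by ring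
            _ ≤ ((B^2)^(n0+1) * M (n0+1))^a :=
                pow_le_pow_left₀ (pow_nonneg hρpos.le _) h4 a
            _ = (B^2)^((n0+1)*a) * M (n0+1) ^ a := by ring
            _ ≤ (B^2)^((n0+1)*a) * M a ^ (n0+1) :=
                mul_le_mul_of_nonneg_left (h6 (n0+1) a hBc) (by positivity)
            _ = ((B^2)^a * M a)^(n0+1) := by ring
        have h5' : ρ^a ≤ (B^2)^a * M a :=
          le_of_pow_le_pow_left₀ (by omega) (mul_nonneg (by positivity) (hpos a).le) h5
        calc M m * ρ^a ≤ M m * ((B^2)^a * M a) :=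
              mul_le_mul_of_nonneg_left h5' (hpos m).le
          _ = (B^2)^a * (M m * M a) := by ring
          _ ≤ (B^2)^a * M (m + a) :=
              mul_le_mul_of_nonneg_left (hsm m a) (by positivity)
          _ = (B^2)^a * M (d * (n0+1)) := by rw [hma]
      · -- d = 1 case
        push_neg at hBc
        have hdn : d * (n0+1) < 2 * (n0+1) := by omega
        have hd1 : d = 1 := by
          have h2 : d < 2 := lt_of_mul_lt_mul_right hdn (by omega)
          omega
        subst hd1
        rw [one_mul] at hma ⊢
        have hmn : m ≤ n0 + 1 := by omega
        have h7 : (M m * ρ^a)^(n0+1) ≤ ((B^2)^a * M (n0+1))^(n0+1) := by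
          calc (M m * ρ^a)^(n0+1) = M m ^ (n0+1) * (ρ^(n0+1))^a := by ring
            _ ≤ M (n0+1) ^ m * ((B^2)^(n0+1) * M (n0+1))^a :=
                mul_le_mul (h6 m (n0+1) hmn)
                  (pow_le_pow_left₀ (pow_nonneg hρpos.le _) h4 a)
                  (pow_nonneg (pow_nonneg hρpos.le _) _)
                  (pow_nonneg (hpos _).le _)
            _ = (B^2)^((n0+1)*a) * M (n0+1) ^ (m + a) := by rw [pow_add]; ring
            _ = ((B^2)^a * M (n0+1))^(n0+1) := by rw [hma]; ring
        exact le_of_pow_le_pow_left₀ (by omega : n0+1 ≠ 0)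
          (mul_nonneg (by positivity) (hpos _).le) h7
  -- conclude
  rw [div_le_iff₀ (hpos (d*(n0+1)))]
  have h2 : M m ≤ (B^2)^a * M (d*(n0+1)) / ρ ^ a :=
    (le_div_iff₀ (by positivity)).mpr key
  refine h2.trans (le_of_eq ?_)
  rw [hρ, div_pow, div_pow]
  field_simp
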